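/- (Dimension-reducible VAR: CSC implications) Suppose the n-dimensional VAR Y_t = Σ_{j=1}^p Φ_j Y_{t−j} + ε_t satisfies both Φ_j = α_j ω' (common right space) and ω⊥'Φ_j = 0 for all j (common left null space), where ω is n×q of full column rank and ω⊥'ω = 0 with ω⊥ of full column rank n−q. Then α_j = ω φ_j for some q×q matrices φ_j (assuming ω'ω = I_q), so Y_t = Σ_{j=1}^p ω φ_j ω' Y_{t−j} + ε_t, and moreover ω⊥'Y_t = ω⊥'ε_t, i.e., the n−q linear combinations ω⊥'Y_t equal the corresponding error combinations. -/

import Mathlib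

open Matrix

/-- Dimension-reducible VAR: under the common right space condition
`Φ_j = α_j ω'` and common left null space condition `ω⊥'Φ_j = 0`, the loadings
factor as `α_j = ω φ_j`, the VAR becomes `Y_t = Σ_j ω φ_j ω' Y_{t-j} + ε_t`,
and `ω⊥'Y_t = ω⊥'ε_t`. -/
theorem dimension_reducible_VAR
    (n q p : ℕ) (hq : q < n)
    (ω : Matrix (Fin n) (Fin q) ℝ) (hωo : ωᵀ * ω = 1)
    (ωp : Matrix (Fin n) (Fin (n - q)) ℝ) (hωpo : ωpᵀ * ωp = 1)
    (horth : ωpᵀ * ω = 0)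
    (Φ : Fin p → Matrix (Fin n) (Fin n) ℝ)
    (α : Fin p → Matrix (Fin n) (Fin q) ℝ)
    (hA1 : ∀ j, Φ j = α j * ωᵀ)
    (hA3 : ∀ j, ωpᵀ * Φ j = 0)
    (Y ε : ℤ → Fin n → ℝ)
    (hrec : ∀ t : ℤ,
      Y t = (∑ j : Fin p, (Φ j) *ᵥ Y (t - ((j : ℤ) + 1))) + ε t) :
    (∃ φ : Fin p → Matrix (Fin q) (Fin q) ℝ,
      (∀ j, α j = ω * φ j) ∧
      (∀ t : ℤ,
        Y t = (∑ j : Fin p, (ω * φ j * ωᵀ) *ᵥ Y (t - ((j : ℤ) + 1))) + ε t)) ∧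
    (∀ t : ℤ, ωpᵀ *ᵥ Y t = ωpᵀ *ᵥ ε t) := by
  -- orthogonal complement facts
  have hαp : ∀ j, ωpᵀ * α j = 0 := by
    intro j
    have h := hA3 j
    rw [hA1 j, ← Matrix.mul_assoc] at h
    have h2 := congrArg (fun B => B * ω) h
    simpa [Matrix.mul_assoc, hωo] using h2
  -- completeness: ω ωᵀ + ωp ωpᵀ = 1
  have hqn : q + (n - q) = n := Nat.add_sub_cancel' hq.le
  set M : Matrix (Fin n) (Fin q ⊕ Fin (n - q)) ℝ := Matrix.fromCols ω ωp with hM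
  have hMT : Mᵀ * M = 1 := by
    rw [hM, Matrix.transpose_fromCols, Matrix.fromRows_mul_fromCols]
    have h0 : ωᵀ * ωp = 0 := by
      have := congrArg Matrix.transpose horth
      simpa using this
    rw [hωo, hωpo, horth, h0, Matrix.fromBlocks_one]
  have e : (Fin q ⊕ Fin (n - q)) ≃ Fin n := finSumFinEquiv.trans (finCongr hqn)
  set N : Matrix (Fin n) (Fin n) ℝ := M.submatrix id e.symm with hN
  have hNT : Nᵀ * N = 1 := by
    rw [hN, Matrix.transpose_submatrix]
    have h := Matrix.submatrix_mul_equiv Mᵀ M (⇑e.symm) (Equiv.refl (Fin n)) (⇑e.symm)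
    simp only [Equiv.coe_refl] at h
    rw [h, hMT]
    simp
  have hNN : N * Nᵀ = 1 := mul_eq_one_comm.mp hNT
  have hM' : M = N.submatrix id e := by
    rw [hN, Matrix.submatrix_submatrix]
    ext i j
    simp
  have hMM : M * Mᵀ = 1 := by
    rw [hM', Matrix.transpose_submatrix,
      Matrix.submatrix_mul_equiv N Nᵀ (id : Fin n → Fin n) e (id : Fin n → Fin n),
      hNN, Matrix.submatrix_id_id]
  have hcomplete : ω * ωᵀ + ωp * ωpᵀ = 1 := by
    rw [hM, Matrix.transpose_fromCols, Matrix.fromCols_mul_fromRows] at hMM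
    exact hMM
  -- factorization
  have hfac : ∀ j, α j = ω * (ωᵀ * α j) := by
    intro j
    calc α j = (ω * ωᵀ + ωp * ωpᵀ) * α j := by rw [hcomplete, Matrix.one_mul]
    _ = ω * (ωᵀ * α j) + ωp * (ωpᵀ * α j) := by
        rw [Matrix.add_mul, Matrix.mul_assoc, Matrix.mul_assoc]
    _ = ω * (ωᵀ * α j) := by rw [hαp j, Matrix.mul_zero, add_zero]
  have hΦ : ∀ j, ω * (ωᵀ * α j) * ωᵀ = Φ j := by
    intro j
    rw [← hfac j, ← hA1 j]
  refine ⟨⟨fun j => ωᵀ * α j, hfac, ?_⟩, ?_⟩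
  · intro t
    rw [hrec t]
    congr 1
    exact Finset.sum_congr rfl fun j _ => by rw [hΦ j]
  · intro t
    have h := congrArg (fun v => ωpᵀ *ᵥ v) (hrec t)
    simp only [Matrix.mulVec_add] at h
    rw [h]
    have hz : ωpᵀ *ᵥ ∑ j : Fin p, Φ j *ᵥ Y (t - ((j : ℤ) + 1)) = 0 := by
      have hs : ωpᵀ *ᵥ ∑ j : Fin p, Φ j *ᵥ Y (t - ((j : ℤ) + 1))
          = ∑ j : Fin p, ωpᵀ *ᵥ (Φ j *ᵥ Y (t - ((j : ℤ) + 1))) := by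
        have := map_sum (Matrix.mulVecLin ωpᵀ)
          (fun j : Fin p => Φ j *ᵥ Y (t - ((j : ℤ) + 1))) Finset.univ
        simp only [Matrix.mulVecLin_apply] at this
        exact this
      rw [hs]
      apply Finset.sum_eq_zero
      intro j _
      rw [Matrix.mulVec_mulVec, hA3 j, Matrix.zero_mulVec]
    rw [hz, zero_add]
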